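/- arXiv:0912.3701 — 3 statements merged into one kernel-verified Lean document; each statement's English description precedes it below -/
import Mathlib

section
/- For every polynomial f ∈ ℂ[X] and every k with 1 ≤ k ≤ n−1, one has U_{k+1} f(y_k) = f(y_{k+1}) U_{k+1} in H_n(q); consequently, if f(y_k) = 0 then f(y_{k+1}) · (q y_k − q^{-1} y_{k+1}) · (q y_{k+1} − q^{-1} y_k) = 0. -/
open FreeAlgebra in
/-- Defining relations of the A-type Hecke algebra `H_n(q)` on generators
`σ_1, …, σ_{n-1}` (generator `i : Fin (n-1)` represents `σ_{i+1}`). -/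
inductive HeckeRel (n : ℕ) (q : ℂ) :
    FreeAlgebra ℂ (Fin (n - 1)) → FreeAlgebra ℂ (Fin (n - 1)) → Prop
  | braid (i j : Fin (n - 1)) (h : (i : ℕ) + 1 = (j : ℕ)) :
      HeckeRel n q (ι ℂ i * ι ℂ j * ι ℂ i) (ι ℂ j * ι ℂ i * ι ℂ j)
  | comm (i j : Fin (n - 1)) (h : (i : ℕ) + 1 < (j : ℕ)) :
      HeckeRel n q (ι ℂ i * ι ℂ j) (ι ℂ j * ι ℂ i)
  | quad (i : Fin (n - 1)) :
      HeckeRel n q (ι ℂ i * ι ℂ i) (1 + (q - q⁻¹) • ι ℂ i)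

/-- The A-type Hecke algebra `H_n(q)`. -/
abbrev HeckeAlgebra (n : ℕ) (q : ℂ) := RingQuot (HeckeRel n q)

/-- The generator `σ_k` (1-based: valid for `1 ≤ k ≤ n-1`; junk value `1` otherwise). -/
noncomputable def heckeGen (n : ℕ) (q : ℂ) (k : ℕ) : HeckeAlgebra n q :=
  if h : k - 1 < n - 1 then RingQuot.mkAlgHom ℂ (HeckeRel n q) (FreeAlgebra.ι ℂ ⟨k - 1, h⟩)
  else 1

/-- The Jucys–Murphy elements, 1-based: `jm 1 = 1`, `jm (i+1) = σ_i * jm i * σ_i`. -/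
noncomputable def jm (n : ℕ) (q : ℂ) : ℕ → HeckeAlgebra n q
  | 0 => 1
  | 1 => 1
  | (i + 2) => heckeGen n q (i + 1) * jm n q (i + 1) * heckeGen n q (i + 1)


/-- The intertwining element `U_{k+1} = σ_k y_k − y_k σ_k`. -/
noncomputable def heckeU (n : ℕ) (q : ℂ) (k : ℕ) : HeckeAlgebra n q :=
  heckeGen n q k * jm n q k - jm n q k * heckeGen n q k

lemma hecke_core {R : Type*} [Ring R] (s y C Q Qi : R)
    (hC : ∀ x, C * x = x * C) (hQ : ∀ x, Q * x = x * Q) (hQi : ∀ x, Qi * x = x * Qi)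
    (hQQi : Q * Qi = 1) (hQiQ : Qi * Q = 1)
    (hCC : C * C = Q * Q + Qi * Qi - 2)
    (hs : s * s = 1 + C * s)
    (hcm : y * (s*y*s) = (s*y*s) * y) :
    (s*y - y*s) * y = (s*y*s) * (s*y - y*s) ∧
    (s*y - y*s) * (s*y - y*s) =
      (Q * y - Qi * (s*y*s)) * (Q * (s*y*s) - Qi * y) := by
  have hCmid : ∀ u v : R, u * (C * v) = C * (u * v) := fun u v => by
    rw [← mul_assoc, ← hC u, mul_assoc]
  have hQmid : ∀ u v : R, u * (Q * v) = Q * (u * v) := fun u v => by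
    rw [← mul_assoc, ← hQ u, mul_assoc]
  have hQimid : ∀ u v : R, u * (Qi * v) = Qi * (u * v) := fun u v => by
    rw [← mul_assoc, ← hQi u, mul_assoc]
  have h1 : s*y*s*y*s = y*s*y + C*(s*y*s*y) := by
    calc s*y*s*y*s = ((s*y*s)*y)*s := by noncomm_ring
      _ = (y*(s*y*s))*s := by rw [hcm]
      _ = y*s*y*(s*s) := by noncomm_ring
      _ = y*s*y*(1 + C*s) := by rw [hs]
      _ = y*s*y + (y*s*y)*(C*s) := by noncomm_ring
      _ = y*s*y + C*((y*s*y)*s) := by rw [hCmid]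
      _ = y*s*y + C*(y*(s*y*s)) := by noncomm_ring
      _ = y*s*y + C*((s*y*s)*y) := by rw [hcm]
      _ = y*s*y + C*(s*y*s*y) := by noncomm_ring
  have G1 : (s*y - y*s) * y = (s*y*s) * (s*y - y*s) := by
    symm
    calc (s*y*s) * (s*y - y*s)
        = (s*y*(s*s))*y - (s*y*s*y*s) := by noncomm_ring
      _ = (s*y*(1 + C*s))*y - (y*s*y + C*(s*y*s*y)) := by rw [hs, h1]
      _ = (s*y*y + (s*y)*(C*(s*y))) - y*s*y - C*(s*y*s*y) := by noncomm_ring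
      _ = (s*y*y + C*((s*y)*(s*y))) - y*s*y - C*(s*y*s*y) := by rw [hCmid]
      _ = (s*y - y*s) * y := by noncomm_ring
  refine ⟨G1, ?_⟩
  have hUs : (s*y - y*s)*s = s*y*s - y - C*(y*s) := by
    calc (s*y - y*s)*s = s*y*s - y*(s*s) := by noncomm_ring
      _ = s*y*s - y*(1 + C*s) := by rw [hs]
      _ = s*y*s - y - y*(C*s) := by noncomm_ring
      _ = s*y*s - y - C*(y*s) := by rw [hCmid]
  have hU2 : (s*y - y*s)*(s*y - y*s)
      = 2*(s*y*s*y) + (C*C)*(s*y*s*y) - y*y - (s*y*s)*(s*y*s) := by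
    calc (s*y - y*s)*(s*y - y*s)
        = ((s*y - y*s)*s)*y - ((s*y - y*s)*y)*s := by noncomm_ring
      _ = (s*y*s - y - C*(y*s))*y - ((s*y*s)*(s*y - y*s))*s := by rw [hUs, G1]
      _ = s*y*s*y - y*y - C*(y*s*y) - (s*y*s)*((s*y - y*s)*s) := by noncomm_ring
      _ = s*y*s*y - y*y - C*(y*s*y) - (s*y*s)*(s*y*s - y - C*(y*s)) := by rw [hUs]
      _ = s*y*s*y - y*y - C*(y*s*y) - (s*y*s)*(s*y*s) + (s*y*s)*y
            + (s*y*s)*(C*(y*s)) := by noncomm_ring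
      _ = s*y*s*y - y*y - C*(y*s*y) - (s*y*s)*(s*y*s) + (s*y*s)*y
            + C*((s*y*s)*(y*s)) := by rw [hCmid]
      _ = s*y*s*y - y*y - C*(y*s*y) - (s*y*s)*(s*y*s) + (s*y*s)*y
            + C*(s*y*s*y*s) := by rw [show (s*y*s)*(y*s) = s*y*s*y*s by noncomm_ring]
      _ = s*y*s*y - y*y - C*(y*s*y) - (s*y*s)*(s*y*s) + (s*y*s)*y
            + C*(y*s*y + C*(s*y*s*y)) := by rw [h1]
      _ = 2*(s*y*s*y) + (C*C)*(s*y*s*y) - y*y - (s*y*s)*(s*y*s) := by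
            rw [mul_add C (y*s*y), ← mul_assoc C C]; noncomm_ring
  rw [hU2, hCC]
  have m1 : (Q*y)*(Q*(s*y*s)) = Q*(Q*(y*(s*y*s))) := by rw [mul_assoc, hQmid]
  have m2 : (Q*y)*(Qi*y) = Q*(Qi*(y*y)) := by rw [mul_assoc, hQimid]
  have m3 : (Qi*(s*y*s))*(Q*(s*y*s)) = Qi*(Q*((s*y*s)*(s*y*s))) := by
    rw [mul_assoc, hQmid]
  have m4 : (Qi*(s*y*s))*(Qi*y) = Qi*(Qi*((s*y*s)*y)) := by rw [mul_assoc, hQimid]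
  have hR : (Q * y - Qi * (s*y*s)) * (Q * (s*y*s) - Qi * y)
      = Q*(Q*((s*y*s)*y)) + Qi*(Qi*((s*y*s)*y)) - y*y - (s*y*s)*(s*y*s) := by
    rw [sub_mul, mul_sub, mul_sub, m1, m2, m3, m4, hcm,
      ← mul_assoc Q Qi, hQQi, one_mul, ← mul_assoc Qi Q, hQiQ, one_mul]
    noncomm_ring
  rw [hR]
  noncomm_ring

lemma gen_quad (n : ℕ) (q : ℂ) (k : ℕ) (h1 : 1 ≤ k) (h2 : k ≤ n - 1) :
    heckeGen n q k * heckeGen n q k = 1 + (q - q⁻¹) • heckeGen n q k := by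
  have h : k - 1 < n - 1 := by omega
  rw [heckeGen, dif_pos h, ← map_mul,
    RingQuot.mkAlgHom_rel ℂ (HeckeRel.quad (q := q) ⟨k - 1, h⟩)]
  simp

lemma gen_braid (n : ℕ) (q : ℂ) (k : ℕ) (h1 : 1 ≤ k) (h2 : k + 1 ≤ n - 1) :
    heckeGen n q k * heckeGen n q (k+1) * heckeGen n q k
      = heckeGen n q (k+1) * heckeGen n q k * heckeGen n q (k+1) := by
  have ha : k - 1 < n - 1 := by omega
  have hb : (k+1) - 1 < n - 1 := by omega
  rw [heckeGen, heckeGen, dif_pos ha, dif_pos hb, ← map_mul, ← map_mul, ← map_mul, ← map_mul,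
    RingQuot.mkAlgHom_rel ℂ (HeckeRel.braid (q := q) ⟨k-1, ha⟩ ⟨(k+1)-1, hb⟩ (by simp; omega))]

lemma gen_comm (n : ℕ) (q : ℂ) (i j : ℕ) (h1 : 1 ≤ i) (h2 : i + 2 ≤ j) :
    heckeGen n q i * heckeGen n q j = heckeGen n q j * heckeGen n q i := by
  by_cases hj : j - 1 < n - 1
  · have hi : i - 1 < n - 1 := by omega
    rw [heckeGen, heckeGen, dif_pos hi, dif_pos hj, ← map_mul, ← map_mul,
      RingQuot.mkAlgHom_rel ℂ (HeckeRel.comm (q := q) ⟨i-1, hi⟩ ⟨j-1, hj⟩ (by simp; omega))]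
  · rw [show heckeGen n q j = 1 from by rw [heckeGen, dif_neg hj], one_mul, mul_one]

lemma gen_comm_jm (n : ℕ) (q : ℂ) (m k : ℕ) (h : m < k) :
    heckeGen n q k * jm n q m = jm n q m * heckeGen n q k := by
  match m with
  | 0 => simp [jm]
  | 1 => simp [jm]
  | (i+2) =>
    have e1 := gen_comm n q (i+1) k (by omega) (by omega)
    have e2 := gen_comm_jm n q (i+1) k (by omega)
    show heckeGen n q k * (heckeGen n q (i+1) * jm n q (i+1) * heckeGen n q (i+1)) = _
    rw [← mul_assoc, ← mul_assoc, ← e1, mul_assoc (heckeGen n q (i+1)), e2,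
      ← mul_assoc, mul_assoc _ (heckeGen n q k), ← e1]
    simp [jm, mul_assoc]

lemma comm_step {R : Type*} [Ring R] (a b z : R) (hbz : b*z = z*b) (hbraid : a*b*a = b*a*b)
    (hIH : z*(a*z*a) = (a*z*a)*z) :
    (a*z*a) * (b*(a*z*a)*b) = (b*(a*z*a)*b) * (a*z*a) :=
  calc (a*z*a) * (b*(a*z*a)*b)
      = (a*z) * (a*b*a) * (z*(a*b)) := by noncomm_ring
    _ = (a*z) * (b*a*b) * (z*(a*b)) := by rw [hbraid]
    _ = a*(z*b)*(a*b*z*a*b) := by noncomm_ring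
    _ = a*(b*z)*(a*b*z*a*b) := by rw [← hbz]
    _ = (a*b)*(z*a*(b*z)*(a*b)) := by noncomm_ring
    _ = (a*b)*(z*a*(z*b)*(a*b)) := by rw [hbz]
    _ = (a*b)*(z*a*z)*(b*a*b) := by noncomm_ring
    _ = (a*b)*(z*a*z)*(a*b*a) := by rw [← hbraid]
    _ = (a*b)*((z*(a*z*a))*(b*a)) := by noncomm_ring
    _ = (a*b)*(((a*z*a)*z)*(b*a)) := by rw [hIH]
    _ = ((a*b*a)*(z*a*z))*(b*a) := by noncomm_ring
    _ = ((b*a*b)*(z*a*z))*(b*a) := by rw [hbraid]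
    _ = (b*a*b)*(z*a)*(z*b)*a := by noncomm_ring
    _ = (b*a*b)*(z*a)*(b*z)*a := by rw [← hbz]
    _ = (b*a)*(b*z)*(a*b*z*a) := by noncomm_ring
    _ = (b*a)*(z*b)*(a*b*z*a) := by rw [hbz]
    _ = (b*a*z)*(b*a*b)*(z*a) := by noncomm_ring
    _ = (b*a*z)*(a*b*a)*(z*a) := by rw [← hbraid]
    _ = (b*(a*z*a)*b)*(a*z*a) := by noncomm_ring

lemma jm_comm (n : ℕ) (q : ℂ) : ∀ k, k ≤ n - 1 →
    jm n q k * jm n q (k+1) = jm n q (k+1) * jm n q k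
  | 0, _ => by simp [jm]
  | 1, _ => by simp [jm]
  | (m+2), h => by
    have hbz : heckeGen n q (m+2) * jm n q (m+1) = jm n q (m+1) * heckeGen n q (m+2) :=
      gen_comm_jm n q (m+1) (m+2) (by omega)
    have hbraid := gen_braid n q (m+1) (by omega) (by omega)
    have hIH : jm n q (m+1) * (heckeGen n q (m+1) * jm n q (m+1) * heckeGen n q (m+1))
        = (heckeGen n q (m+1) * jm n q (m+1) * heckeGen n q (m+1)) * jm n q (m+1) :=
      jm_comm n q (m+1) (by omega)
    show (heckeGen n q (m+1) * jm n q (m+1) * heckeGen n q (m+1)) *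
        (heckeGen n q (m+2) * jm n q (m+2) * heckeGen n q (m+2)) = _
    show _ * (heckeGen n q (m+2) * (heckeGen n q (m+1) * jm n q (m+1) * heckeGen n q (m+1))
        * heckeGen n q (m+2)) = _
    exact comm_step _ _ _ hbz hbraid hIH


/-- `U_{k+1} f(y_k) = f(y_{k+1}) U_{k+1}` for every polynomial `f`, and
consequently `f(y_k) = 0` implies
`f(y_{k+1}) (q y_k − q⁻¹ y_{k+1}) (q y_{k+1} − q⁻¹ y_k) = 0`. -/
theorem heckeU_poly_intertwine (n : ℕ) (q : ℂ) (hn : 1 ≤ n) (hq : q ≠ 0) (k : ℕ)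
    (hk1 : 1 ≤ k) (hkn : k ≤ n - 1) (f : Polynomial ℂ) :
    heckeU n q k * Polynomial.aeval (jm n q k) f =
      Polynomial.aeval (jm n q (k + 1)) f * heckeU n q k ∧
    (Polynomial.aeval (jm n q k) f = 0 →
      Polynomial.aeval (jm n q (k + 1)) f *
        ((q • jm n q k - q⁻¹ • jm n q (k + 1)) *
          (q • jm n q (k + 1) - q⁻¹ • jm n q k)) = 0) := by
  obtain ⟨m, rfl⟩ : ∃ m, k = m + 1 := ⟨k - 1, by omega⟩
  set R := HeckeAlgebra n q
  set s : R := heckeGen n q (m+1) with hsdef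
  set y : R := jm n q (m+1) with hydef
  have hy' : jm n q (m+1+1) = s * y * s := rfl
  set φ := algebraMap ℂ R with hφ
  have hC : ∀ x : R, φ (q - q⁻¹) * x = x * φ (q - q⁻¹) := fun x => Algebra.commutes _ x
  have hQ : ∀ x : R, φ q * x = x * φ q := fun x => Algebra.commutes _ x
  have hQi : ∀ x : R, φ q⁻¹ * x = x * φ q⁻¹ := fun x => Algebra.commutes _ x
  have hQQi : φ q * φ q⁻¹ = 1 := by rw [← map_mul, mul_inv_cancel₀ hq, map_one]
  have hQiQ : φ q⁻¹ * φ q = 1 := by rw [← map_mul, inv_mul_cancel₀ hq, map_one]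
  have hCC : φ (q - q⁻¹) * φ (q - q⁻¹) = φ q * φ q + φ q⁻¹ * φ q⁻¹ - 2 := by
    have e : (q - q⁻¹) * (q - q⁻¹) = q*q + q⁻¹*q⁻¹ - 2 := by field_simp; ring
    rw [← map_mul, e, map_sub, map_add, map_mul, map_mul, map_ofNat]
  have hs : s * s = 1 + φ (q - q⁻¹) * s := by
    rw [← Algebra.smul_def]
    exact gen_quad n q (m+1) (by omega) hkn
  have hcm : y * (s*y*s) = (s*y*s) * y := by
    rw [← hy']; exact jm_comm n q (m+1) hkn
  obtain ⟨G1, G2⟩ := hecke_core s y (φ (q - q⁻¹)) (φ q) (φ q⁻¹) hC hQ hQi hQQi hQiQ hCC hs hcm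
  have hU : heckeU n q (m+1) = s * y - y * s := rfl
  have hpow : ∀ j : ℕ, (s*y - y*s) * y ^ j = (s*y*s) ^ j * (s*y - y*s) := by
    intro j
    induction j with
    | zero => simp
    | succ i ih =>
      rw [pow_succ, ← mul_assoc, ih, mul_assoc, G1, pow_succ, mul_assoc]
      exact (mul_assoc _ _ _).symm
  have part1 : ∀ g : Polynomial ℂ, (s*y - y*s) * Polynomial.aeval y g
      = Polynomial.aeval (s*y*s) g * (s*y - y*s) := by
    intro g
    induction g using Polynomial.induction_on' with
    | add p r hp hr => rw [map_add, map_add, mul_add, add_mul, hp, hr]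
    | monomial j a =>
      have hca : ∀ x : R, x * φ a = φ a * x := fun x => (Algebra.commutes a x).symm
      rw [Polynomial.aeval_monomial, Polynomial.aeval_monomial, ← hφ, ← mul_assoc,
        hca, mul_assoc, hpow, ← mul_assoc]
  constructor
  · rw [hU, hy', part1]
  · intro hf0
    have h0 : Polynomial.aeval (s*y*s) f * (s*y - y*s) = 0 := by
      rw [← part1, hf0, mul_zero]
    rw [hy', show (q • y - q⁻¹ • (s*y*s)) * (q • (s*y*s) - q⁻¹ • y)
        = (φ q * y - φ q⁻¹ * (s*y*s)) * (φ q * (s*y*s) - φ q⁻¹ * y) from by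
          rw [Algebra.smul_def, Algebra.smul_def, Algebra.smul_def, Algebra.smul_def],
      ← G2, ← mul_assoc, h0, zero_mul]
end

section
/- (Proposition 2) Let ρ be a representation of H_n(q) on a finite-dimensional complex vector space V. Then for each j with 1 ≤ j ≤ n, every eigenvalue of the operator ρ(y_j) is of the form q^{2m} for some integer m with 1 − j ≤ m ≤ j − 1. -/
namespace HeckeAux

variable (n : ℕ) (q : ℂ)

lemma gen_def (k : ℕ) (h : k - 1 < n - 1) :
    heckeGen n q k = RingQuot.mkAlgHom ℂ (HeckeRel n q) (FreeAlgebra.ι ℂ ⟨k - 1, h⟩) :=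
  dif_pos h

lemma quad (k : ℕ) (h1 : 1 ≤ k) (h2 : k ≤ n - 1) :
    heckeGen n q k * heckeGen n q k = 1 + (q - q⁻¹) • heckeGen n q k := by
  have h : k - 1 < n - 1 := by omega
  rw [gen_def n q k h, ← map_mul,
    RingQuot.mkAlgHom_rel ℂ (HeckeRel.quad ⟨k - 1, h⟩), map_add, map_one, map_smul]

lemma braid (k : ℕ) (h1 : 1 ≤ k) (h2 : k + 1 ≤ n - 1) :
    heckeGen n q k * heckeGen n q (k + 1) * heckeGen n q k
      = heckeGen n q (k + 1) * heckeGen n q k * heckeGen n q (k + 1) := by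
  have ha : k - 1 < n - 1 := by omega
  have hb : (k + 1) - 1 < n - 1 := by omega
  rw [gen_def n q k ha, gen_def n q (k + 1) hb, ← map_mul, ← map_mul, ← map_mul, ← map_mul,
    RingQuot.mkAlgHom_rel ℂ (HeckeRel.braid ⟨k - 1, ha⟩ ⟨(k + 1) - 1, hb⟩ (by simp; omega))]

lemma gen_comm (a b : ℕ) (h1 : 1 ≤ a) (h : a + 2 ≤ b) :
    Commute (heckeGen n q a) (heckeGen n q b) := by
  unfold heckeGen
  split_ifs with hA hB hB
  · show _ * _ = _ * _
    rw [← map_mul, ← map_mul,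
      RingQuot.mkAlgHom_rel ℂ (HeckeRel.comm ⟨a - 1, hA⟩ ⟨b - 1, hB⟩ (by simp; omega))]
  · exact Commute.one_right _
  · exact Commute.one_left _
  · exact Commute.one_left _

lemma gen_jm_high : ∀ (k m : ℕ), k + 1 ≤ m → Commute (heckeGen n q m) (jm n q k)
  | 0, m, _ => by simp only [jm]; exact Commute.one_right _
  | 1, m, _ => by simp only [jm]; exact Commute.one_right _
  | (k + 2), m, h => by
    simp only [jm]
    exact (((gen_comm n q (k + 1) m (by omega) (by omega)).symm.mul_right
      (gen_jm_high (k + 1) m (by omega))).mul_right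
      (gen_comm n q (k + 1) m (by omega) (by omega)).symm)

lemma gen_jm_low : ∀ (k m : ℕ), 1 ≤ m → m + 2 ≤ k → k ≤ n → Commute (heckeGen n q m) (jm n q k)
  | 0, m, h1, h2, _ => by omega
  | 1, m, h1, h2, _ => by omega
  | 2, m, h1, h2, _ => by omega
  | (k + 3), m, h1, h2, h3 => by
    rcases Nat.lt_or_ge m (k + 1) with hm | hm
    · simp only [jm]
      exact (((gen_comm n q m (k + 2) h1 (by omega)).mul_right
        (gen_jm_low (k + 2) m h1 (by omega) (by omega))).mul_right
        (gen_comm n q m (k + 2) h1 (by omega)))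
    · have hmeq : m = k + 1 := by omega
      subst hmeq
      -- hard case: b = σ_{k+1}, a = σ_{k+2}, z = jm (k+1)
      show Commute _ (heckeGen n q (k + 2) * jm n q (k + 2) * heckeGen n q (k + 2))
      have hjm : jm n q (k + 2) = heckeGen n q (k + 1) * jm n q (k + 1) * heckeGen n q (k + 1) :=
        rfl
      set a := heckeGen n q (k + 2) with hadef
      set b := heckeGen n q (k + 1) with hbdef
      set z := jm n q (k + 1) with hzdef
      have hbraid : b * a * b = a * b * a := braid n q (k + 1) (by omega) (by omega)
      have haz : a * z = z * a := gen_jm_high n q (k + 1) (k + 2) (by omega)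
      show b * (a * (b * z * b) * a) = (a * (b * z * b) * a) * b
      calc b * (a * (b * z * b) * a) = (b * a * b) * (z * (b * a)) := by
            simp only [mul_assoc]
        _ = (a * b * a) * (z * (b * a)) := by rw [hbraid]
        _ = (a * b) * ((a * z) * (b * a)) := by simp only [mul_assoc]
        _ = (a * b) * ((z * a) * (b * a)) := by rw [haz]
        _ = (a * b * z) * (a * b * a) := by simp only [mul_assoc]
        _ = (a * b * z) * (b * a * b) := by rw [hbraid]
        _ = (a * (b * z * b) * a) * b := by simp only [mul_assoc]

lemma jm_adj_comm : ∀ (k : ℕ), k + 1 ≤ n → Commute (jm n q k) (jm n q (k + 1))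
  | 0, _ => by simp only [jm]; exact Commute.one_left _
  | 1, _ => by simp only [jm]; exact Commute.one_left _
  | (k + 2), h => by
    have h1 : Commute (heckeGen n q (k + 1)) (jm n q (k + 3)) :=
      gen_jm_low n q (k + 3) (k + 1) (by omega) (by omega) h
    have h2 : Commute (jm n q (k + 1)) (jm n q (k + 3)) := by
      show Commute _ (heckeGen n q (k + 2) * jm n q (k + 2) * heckeGen n q (k + 2))
      exact (((gen_jm_high n q (k + 1) (k + 2) le_rfl).symm.mul_right
        (jm_adj_comm (k + 1) (by omega))).mul_right
        (gen_jm_high n q (k + 1) (k + 2) le_rfl).symm)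
    show Commute (heckeGen n q (k + 1) * jm n q (k + 1) * heckeGen n q (k + 1)) _
    exact (h1.mul_left h2).mul_left h1

end HeckeAux

/-- Proposition 2: in a finite-dimensional representation `ρ` of `H_n(q)`,
every eigenvalue of `ρ(y_j)` is of the form `q^(2m)` with `1 − j ≤ m ≤ j − 1`. -/
theorem jm_eigenvalue_spec (n : ℕ) (q : ℂ) (hn : 1 ≤ n) (hq : q ≠ 0)
    (V : Type) [AddCommGroup V] [Module ℂ V] [FiniteDimensional ℂ V]
    (ρ : HeckeAlgebra n q →ₐ[ℂ] Module.End ℂ V) (j : ℕ) (hj1 : 1 ≤ j) (hjn : j ≤ n)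
    (μ : ℂ) (hμ : Module.End.HasEigenvalue (ρ (jm n q j)) μ) :
    ∃ m : ℤ, μ = q ^ (2 * m) ∧ 1 - (j : ℤ) ≤ m ∧ m ≤ (j : ℤ) - 1 := by
  have key : ∀ j : ℕ, 1 ≤ j → j ≤ n → ∀ μ : ℂ, Module.End.HasEigenvalue (ρ (jm n q j)) μ →
      ∃ m : ℤ, μ = q ^ (2 * m) ∧ 1 - (j : ℤ) ≤ m ∧ m ≤ (j : ℤ) - 1 := by
    intro j
    induction j with
    | zero => intro h; exact absurd h (by omega)
    | succ i ih =>
      intro _ hjn' μ hμ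
      rcases Nat.eq_zero_or_pos i with hi | hi
      · subst hi
        obtain ⟨v, hv⟩ := hμ.exists_hasEigenvector
        have h1 : ρ (jm n q 1) = 1 := by rw [show jm n q 1 = 1 from rfl, map_one]
        rw [h1] at hv
        have hv1 : μ • v = (1 : ℂ) • v := by
          rw [one_smul, ← hv.apply_eq_smul]; rfl
        have hμ1 : μ = 1 := smul_left_injective ℂ hv.2 hv1
        exact ⟨0, by simp [hμ1], by norm_num, by norm_num⟩
      · obtain ⟨t, rfl⟩ : ∃ t, i = t + 1 := ⟨i - 1, by omega⟩
        set s : Module.End ℂ V := ρ (heckeGen n q (t + 1)) with hs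
        set B : Module.End ℂ V := ρ (jm n q (t + 1)) with hB
        set A : Module.End ℂ V := ρ (jm n q (t + 1 + 1)) with hA
        have hAdef : A = s * B * s := by
          rw [hA, show jm n q (t + 1 + 1)
            = heckeGen n q (t + 1) * jm n q (t + 1) * heckeGen n q (t + 1) from rfl,
            map_mul, map_mul]
        have hcomm : B * A = A * B := by
          rw [hA, hB, ← map_mul, ← map_mul,
            (HeckeAux.jm_adj_comm n q (t + 1) (by omega)).eq]
        have hss : s * s = (1 : Module.End ℂ V) + (q - q⁻¹) • s := by
          rw [hs, ← map_mul, HeckeAux.quad n q (t + 1) (by omega) (by omega),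
            map_add, map_one, map_smul]
        have hBE : ∀ x ∈ Module.End.eigenspace A μ, B x ∈ Module.End.eigenspace A μ := by
          intro x hx
          rw [Module.End.mem_eigenspace_iff] at hx ⊢
          have hx2 : A (B x) = B (A x) := by
            rw [← Module.End.mul_apply, ← Module.End.mul_apply, ← hcomm]
          rw [hx2, hx, map_smul]
        haveI : Nontrivial (Module.End.eigenspace A μ) :=
          Submodule.nontrivial_iff_ne_bot.mpr hμ
        obtain ⟨lam, hlam⟩ := Module.End.exists_eigenvalue (LinearMap.restrict B hBE)
        obtain ⟨x, hx⟩ := hlam.exists_hasEigenvector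
        set v : V := (x : V) with hvdef
        have hv0 : v ≠ 0 := fun h => hx.2 (Subtype.ext h)
        have hAv : A v = μ • v := Module.End.mem_eigenspace_iff.mp x.2
        have hBv : B v = lam • v := by
          have hres := hx.apply_eq_smul
          calc B v = ((LinearMap.restrict B hBE) x : V) :=
                (LinearMap.restrict_coe_apply B hBE x).symm
            _ = ((lam • x : Module.End.eigenspace A μ) : V) := by rw [hres]
            _ = lam • v := rfl
        have hlamV : Module.End.HasEigenvalue B lam :=
          Module.End.hasEigenvalue_of_hasEigenvector
            ⟨Module.End.mem_eigenspace_iff.mpr hBv, hv0⟩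
        set w : V := s v with hw
        have hBw : B w = μ • w - ((q - q⁻¹) * μ) • v := by
          have h1 : A v = s (B w) := by rw [hAdef]; rfl
          have h2 : s (s (B w)) = B w + (q - q⁻¹) • s (B w) := by
            have hcf := DFunLike.congr_fun hss (B w)
            simpa [Module.End.mul_apply] using hcf
          have h3 : s (A v) = B w + (q - q⁻¹) • (A v) := by
            rw [h1, h2, ← h1]
          have h4 : B w = s (A v) - (q - q⁻¹) • (A v) := by
            rw [h3]; abel
          rw [h4, hAv, map_smul, smul_smul, mul_comm]
        by_cases hdep : ∃ c : ℂ, s v = c • v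
        · obtain ⟨c, hc⟩ := hdep
          have hssv := DFunLike.congr_fun hss v
          have hc2 : c * c = 1 + (q - q⁻¹) * c := by
            apply smul_left_injective ℂ hv0
            show (c * c) • v = (1 + (q - q⁻¹) * c) • v
            calc (c * c) • v = c • (c • v) := by rw [smul_smul]
              _ = s (s v) := by rw [hc, map_smul, hc]
              _ = (s * s) v := rfl
              _ = v + ((q - q⁻¹) * c) • v := by
                  rw [hss]; simp [Module.End.mul_apply, hc, smul_smul]
              _ = (1 + (q - q⁻¹) * c) • v := by rw [add_smul, one_smul]
          have hμl : μ = c * c * lam := by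
            apply smul_left_injective ℂ hv0
            show μ • v = (c * c * lam) • v
            calc μ • v = A v := hAv.symm
              _ = s (B (s v)) := by rw [hAdef]; rfl
              _ = (c * c * lam) • v := by
                  rw [hc, map_smul, hBv, map_smul, map_smul, hc, smul_smul, smul_smul]
                  congr 1; ring
          obtain ⟨m, hmeq, hm1, hm2⟩ := ih (by omega) (by omega) lam hlamV
          have hfac : (c - q) * (c + q⁻¹) = 0 := by
            have hq1 : q * q⁻¹ = 1 := mul_inv_cancel₀ hq
            linear_combination hc2 - hq1
          rcases mul_eq_zero.mp hfac with h | h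
          · have hcq : c = q := by linear_combination h
            refine ⟨m + 1, ?_, by push_cast at hm1 hm2 ⊢; omega,
              by push_cast at hm1 hm2 ⊢; omega⟩
            rw [hμl, hcq, hmeq, show 2 * (m + 1) = 2 * m + 1 + 1 by ring,
              zpow_add₀ hq, zpow_add₀ hq, zpow_one]
            ring
          · have hcq : c = -q⁻¹ := by linear_combination h
            refine ⟨m - 1, ?_, by push_cast at hm1 hm2 ⊢; omega,
              by push_cast at hm1 hm2 ⊢; omega⟩
            rw [hμl, hcq, hmeq, show 2 * (m - 1) = 2 * m + (-1) + (-1) by ring,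
              zpow_add₀ hq, zpow_add₀ hq, zpow_neg_one]
            ring
        · by_cases hml : μ = lam
          · obtain ⟨m, hmeq, hm1, hm2⟩ := ih (by omega) (by omega) lam hlamV
            exact ⟨m, by rw [hml, hmeq], by push_cast at hm1 hm2 ⊢; omega,
              by push_cast at hm1 hm2 ⊢; omega⟩
          · have hlm : lam - μ ≠ 0 := sub_ne_zero.mpr (Ne.symm hml)
            set c : ℂ := (q - q⁻¹) * μ / (lam - μ) with hcdef
            have hu0 : w + c • v ≠ 0 := by
              intro h
              refine hdep ⟨-c, ?_⟩
              have hwv : w = -(c • v) := eq_neg_of_add_eq_zero_left h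
              rw [← hw, hwv, neg_smul]
            have hcc : c * (lam - μ) = (q - q⁻¹) * μ := div_mul_cancel₀ _ hlm
            have hBu : B (w + c • v) = μ • (w + c • v) := by
              rw [map_add, map_smul, hBw, hBv, smul_add, smul_smul, smul_smul,
                sub_add_eq_add_sub, add_sub_assoc]
              congr 1
              rw [← sub_smul]
              congr 1
              linear_combination hcc
            have hμB : Module.End.HasEigenvalue B μ :=
              Module.End.hasEigenvalue_of_hasEigenvector
                ⟨Module.End.mem_eigenspace_iff.mpr hBu, hu0⟩
            obtain ⟨m, hmeq, hm1, hm2⟩ := ih (by omega) (by omega) μ hμB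
            exact ⟨m, hmeq, by push_cast at hm1 hm2 ⊢; omega,
              by push_cast at hm1 hm2 ⊢; omega⟩
  exact key j hj1 hjn μ hμ
end

section
/- (Proposition 3(a)) Let q ∈ ℂ with q ≠ 0 and q² ≠ 1, and let V be a module over H_n(q) such that the action of y_i on V is diagonalizable (V is spanned by eigenvectors of y_i), where 1 ≤ i ≤ n−1. If v ∈ V satisfies y_i · v = a v and y_{i+1} · v = a v for the same scalar a ∈ ℂ, then v = 0. In other words, y_i and y_{i+1} have no nonzero common eigenvector with equal eigenvalues. -/
/-- Quadratic relation for a valid generator. -/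
lemma heckeGen_quad {n : ℕ} {q : ℂ} {k : ℕ} (h : k - 1 < n - 1) :
    heckeGen n q k * heckeGen n q k = 1 + (q - q⁻¹) • heckeGen n q k := by
  rw [heckeGen, dif_pos h]
  rw [← map_mul, RingQuot.mkAlgHom_rel ℂ (HeckeRel.quad ⟨k - 1, h⟩), map_add, map_one, map_smul]

/-- Every generator is invertible (two-sided). -/
lemma heckeGen_inv (n : ℕ) (q : ℂ) (k : ℕ) :
    ∃ t, heckeGen n q k * t = 1 ∧ t * heckeGen n q k = 1 := by
  by_cases h : k - 1 < n - 1
  · refine ⟨heckeGen n q k - (q - q⁻¹) • 1, ?_, ?_⟩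
    · rw [mul_sub, heckeGen_quad h, mul_smul_comm, mul_one]
      abel
    · rw [sub_mul, heckeGen_quad h, smul_mul_assoc, one_mul]
      abel
  · exact ⟨1, by rw [heckeGen, dif_neg h, one_mul], by rw [heckeGen, dif_neg h, one_mul]⟩

/-- Every Jucys–Murphy element is invertible. -/
lemma jm_inv (n : ℕ) (q : ℂ) : ∀ k, ∃ t, jm n q k * t = 1 ∧ t * jm n q k = 1
  | 0 => ⟨1, by simp [jm], by simp [jm]⟩
  | 1 => ⟨1, by simp [jm], by simp [jm]⟩
  | (i + 2) => by
      obtain ⟨t, ht1, ht2⟩ := jm_inv n q (i + 1)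
      obtain ⟨s, hs1, hs2⟩ := heckeGen_inv n q (i + 1)
      refine ⟨s * t * s, ?_, ?_⟩
      · show heckeGen n q (i + 1) * jm n q (i + 1) * heckeGen n q (i + 1) * (s * t * s) = 1
        calc heckeGen n q (i + 1) * jm n q (i + 1) * heckeGen n q (i + 1) * (s * t * s)
            = heckeGen n q (i + 1) * (jm n q (i + 1) * ((heckeGen n q (i + 1) * s) * t)) * s := by
              noncomm_ring
          _ = 1 := by rw [hs1, one_mul, ht1, mul_one, hs1]
      · show s * t * s * (heckeGen n q (i + 1) * jm n q (i + 1) * heckeGen n q (i + 1)) = 1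
        calc s * t * s * (heckeGen n q (i + 1) * jm n q (i + 1) * heckeGen n q (i + 1))
            = s * (t * ((s * heckeGen n q (i + 1)) * jm n q (i + 1))) * heckeGen n q (i + 1) := by
              noncomm_ring
          _ = 1 := by rw [hs2, one_mul, ht2, mul_one, hs2]

/-- For a diagonalizable endomorphism, `ker (f - a)² = ker (f - a)`. -/
lemma diag_sq_ker {V : Type} [AddCommGroup V] [Module ℂ V] (f : Module.End ℂ V)
    (hdiag : (⨆ μ : ℂ, Module.End.eigenspace f μ) = ⊤) (a : ℂ) (w : V)
    (h2 : (f - a • 1) ((f - a • 1) w) = 0) : (f - a • 1) w = 0 := by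
  have hw : w ∈ (⨆ μ : ℂ, Module.End.eigenspace f μ) := hdiag ▸ Submodule.mem_top
  rw [iSup_split (fun μ => Module.End.eigenspace f μ) (fun μ => μ = a)] at hw
  obtain ⟨x, hx, y, hy, rfl⟩ := Submodule.mem_sup.mp hw
  have hx' : x ∈ Module.End.eigenspace f a := by simpa using hx
  have hgx : (f - a • 1) x = 0 := by
    have := Module.End.eigenspace_def (f := f) (μ := a) ▸ hx'
    simpa using this
  have h2y : (f - a • 1) ((f - a • 1) y) = 0 := by
    have h := h2
    simp only [map_add, hgx, map_zero, zero_add] at h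
    exact h
  have hy2 : y ∈ f.genEigenspace a 2 := by
    rw [show ((2 : ℕ∞)) = ((2 : ℕ) : ℕ∞) by norm_num, Module.End.mem_genEigenspace_nat]
    simpa [pow_two] using h2y
  have hy' : y ∈ ⨆ μ, ⨆ (_ : μ ≠ a), f.genEigenspace μ 2 := by
    have hle : (⨆ μ, ⨆ (_ : ¬ μ = a), Module.End.eigenspace f μ) ≤
        ⨆ μ, ⨆ (_ : μ ≠ a), f.genEigenspace μ 2 :=
      iSup₂_mono fun μ _ => (f.genEigenspace μ).monotone (by norm_num)
    exact hle hy
  have hdisj := (Module.End.independent_genEigenspace f 2) a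
  have hy0 : y = 0 := by
    have := hdisj.le_bot ⟨hy2, hy'⟩
    simpa using this
  rw [map_add, hgx, hy0, map_zero, add_zero]

/-- Proposition 3(a): if the action of `y_i` on `V` is diagonalizable,
then `y_i` and `y_{i+1}` have no nonzero common eigenvector with equal eigenvalues. -/
theorem jm_no_equal_eigenvalues (n : ℕ) (q : ℂ) (hq : q ≠ 0) (hq2 : q ^ 2 ≠ 1)
    (hn : 1 ≤ n)
    (V : Type) [AddCommGroup V] [Module ℂ V]
    (ρ : HeckeAlgebra n q →ₐ[ℂ] Module.End ℂ V) (i : ℕ) (hi1 : 1 ≤ i) (hin : i ≤ n - 1)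
    (hdiag : (⨆ μ : ℂ, Module.End.eigenspace (ρ (jm n q i)) μ) = ⊤)
    (v : V) (a : ℂ)
    (hva : ρ (jm n q i) v = a • v) (hvb : ρ (jm n q (i + 1)) v = a • v) :
    v = 0 := by
  set c : ℂ := q - q⁻¹ with hc_def
  have hc : c ≠ 0 := by
    intro h
    apply hq2
    have : q = q⁻¹ := by linear_combination h
    field_simp at this
    exact this
  obtain ⟨m, rfl⟩ : ∃ m, i = m + 1 := ⟨i - 1, by omega⟩
  have hvalid : (m + 1) - 1 < n - 1 := by omega
  set Y : Module.End ℂ V := ρ (jm n q (m + 1)) with hY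
  set S : Module.End ℂ V := ρ (heckeGen n q (m + 1)) with hS
  -- the quadratic relation for S, hence its inverse
  have hquad : S * S = 1 + c • S := by
    rw [hS, ← map_mul, heckeGen_quad hvalid, map_add, map_one, map_smul]
  have hSinv : (S - c • 1) * S = 1 := by
    rw [sub_mul, hquad, smul_mul_assoc, one_mul]; abel
  -- from hvb : S (Y (S v)) = a • v
  have hvb' : S (Y (S v)) = a • v := by
    have : ρ (jm n q (m + 1 + 1)) = S * Y * S := by
      show ρ (jm n q (m + 2)) = S * Y * S
      rw [jm, map_mul, map_mul, hS, hY]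
    rw [this] at hvb
    exact hvb
  have hYSv : Y (S v) = a • S v - (a * c) • v := by
    have h1 : (S - c • 1) (S (Y (S v))) = Y (S v) := by
      rw [← Module.End.mul_apply, ← Module.End.mul_apply, hSinv, one_mul]
    rw [hvb'] at h1
    rw [← h1]
    simp only [LinearMap.sub_apply, LinearMap.smul_apply, Module.End.one_apply, map_smul]
    module
  -- (Y - a)² (S v) = 0
  have hgv : (Y - a • 1) v = 0 := by
    simp only [LinearMap.sub_apply, LinearMap.smul_apply, Module.End.one_apply, hva, sub_self]
  have hg2 : (Y - a • 1) ((Y - a • 1) (S v)) = 0 := by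
    have h1 : (Y - a • 1) (S v) = -((a * c) • v) := by
      simp only [LinearMap.sub_apply, LinearMap.smul_apply, Module.End.one_apply, hYSv]
      abel
    rw [h1, map_neg, map_smul, hgv, smul_zero, neg_zero]
  have hker := diag_sq_ker Y hdiag a (S v) hg2
  have hacv : (a * c) • v = 0 := by
    have h1 : (Y - a • 1) (S v) = -((a * c) • v) := by
      simp only [LinearMap.sub_apply, LinearMap.smul_apply, Module.End.one_apply, hYSv]
      abel
    rw [hker] at h1
    simpa using h1.symm
  rcases smul_eq_zero.mp hacv with h | h
  · -- a * c = 0, so a = 0, so Y v = 0 and Y invertible gives v = 0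
    have ha : a = 0 := by
      rcases mul_eq_zero.mp h with h' | h'
      · exact h'
      · exact absurd h' hc
    obtain ⟨t, _, ht2⟩ := jm_inv n q (m + 1)
    have : v = ρ (t * jm n q (m + 1)) v := by rw [ht2, map_one, Module.End.one_apply]
    rw [this, map_mul, Module.End.mul_apply, hva, ha, zero_smul, map_zero]
  · exact h
end
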